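/- For every k ≥ 0 and every (s,t) ∈ Y: the point 𝔤_k(𝓕(s,t)) − κ does not lie in the real ray (−∞, 0] (so 𝔤_{k+1}(s,t) is obtained by applying the principal logarithm away from its branch cut), |Re(𝔤_k(s,t)) − t| < 2, and |𝔤_k(s,t) − (t + 2πi·s₁)| < π + 2. -/

import Mathlib

open Filter Topology ENNReal

noncomputable section

/-- The space of external addresses: integer sequences (indexed from 0, so index `k`
corresponds to the entry `s_{k+1}` of the paper) with the lexicographic order. -/
abbrev Addr : Type := Lex (ℕ → ℤ)

/-- The shift map `σ` on external addresses. -/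
def shiftA (s : Addr) : Addr := toLex (fun n => ofLex s (n + 1))

/-- The model growth function `F(t) = e^t - 1`. -/
def Fexp (t : ℝ) : ℝ := Real.exp t - 1

/-- The model map `𝓕(s,t) = (σ s, F t - 2π |s₂|)`. -/
def Fmod (p : Addr × ℝ) : Addr × ℝ :=
  (shiftA p.1, Fexp p.2 - 2 * Real.pi * |((ofLex p.1 1 : ℤ) : ℝ)|)

/-- The model set `X̄ = {(s,t) : T(𝓕ⁿ(s,t)) ≥ 0 for all n ≥ 0}`. -/
def Xbar : Set (Addr × ℝ) := {p | ∀ n : ℕ, 0 ≤ (Fmod^[n] p).2}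

/-- The model escaping set `X = {(s,t) ∈ X̄ : T(𝓕ⁿ(s,t)) → ∞}`. -/
def Xset : Set (Addr × ℝ) :=
  {p | p ∈ Xbar ∧ Tendsto (fun n : ℕ => (Fmod^[n] p).2) atTop atTop}

/-- The minimal potential `t_s ∈ [0,∞]` of an address (`∞` if `(s,t) ∉ X̄` for all `t ≥ 0`). -/
def tS (s : Addr) : ℝ≥0∞ :=
  sInf (ENNReal.ofReal '' {t : ℝ | 0 ≤ t ∧ (s, t) ∈ Xbar})

/-- The exponential map `E_κ(z) = e^z + κ`. -/
def Eexp (κ : ℂ) (z : ℂ) : ℂ := Complex.exp z + κ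

/-- The escaping set `I(E_κ)`. -/
def escapingSet (κ : ℂ) : Set ℂ :=
  {z | Tendsto (fun n : ℕ => ‖(Eexp κ)^[n] z‖) atTop atTop}

/-- The order topology induced by the lexicographic order on external addresses. -/
instance : TopologicalSpace Addr := Preorder.topology Addr
instance : OrderTopology Addr := ⟨rfl⟩

/-- The constant `Q(K) = max(log(4(K+π+3)), π+2)`. -/
def Qconst (K : ℝ) : ℝ := max (Real.log (4 * (K + Real.pi + 3))) (Real.pi + 2)

/-- `Y_Q = {(s,t) ∈ X̄ : T(𝓕ⁿ(s,t)) ≥ Q for all n}`. -/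
def Yset (Q : ℝ) : Set (Addr × ℝ) :=
  {p | p ∈ Xbar ∧ ∀ n : ℕ, Q ≤ (Fmod^[n] p).2}

/-- `Z(s,t) = t + 2πi s₁`. -/
def Zc (p : Addr × ℝ) : ℂ :=
  (p.2 : ℂ) + 2 * Real.pi * Complex.I * ((ofLex p.1 0 : ℤ) : ℂ)

/-- The approximating maps `𝔤_k`: `𝔤₀ = Z` and
`𝔤_{k+1}(s,t) = Log(𝔤_k(𝓕(s,t)) - κ) + 2πi s₁`, with `Log` the principal logarithm. -/
def gmap (κ : ℂ) : ℕ → Addr × ℝ → ℂ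
  | 0 => Zc
  | k + 1 => fun p =>
      Complex.log (gmap κ k (Fmod p) - κ) + 2 * Real.pi * Complex.I * ((ofLex p.1 0 : ℤ) : ℂ)


lemma FmodY {Q : ℝ} {p : Addr × ℝ} (hp : p ∈ Yset Q) : Fmod p ∈ Yset Q := by
  obtain ⟨hX, hQ⟩ := hp
  refine ⟨fun n => ?_, fun n => ?_⟩
  · have := hX (n + 1)
    rwa [Function.iterate_succ_apply] at this
  · have := hQ (n + 1)
    rwa [Function.iterate_succ_apply] at this

lemma Zc_re (p : Addr × ℝ) : (Zc p).re = p.2 := by simp [Zc]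

lemma Zc_im (p : Addr × ℝ) : (Zc p).im = 2 * Real.pi * ((ofLex p.1 0 : ℤ) : ℝ) := by
  simp [Zc, Complex.mul_im]

lemma exp_Q_ge (K : ℝ) (hK : 2 * Real.pi + 6 < K) :
    4 * (K + Real.pi + 3) ≤ Real.exp (Qconst K) := by
  have hπ := Real.pi_pos
  have h0 : (0:ℝ) < 4 * (K + Real.pi + 3) := by nlinarith
  calc 4 * (K + Real.pi + 3) = Real.exp (Real.log (4 * (K + Real.pi + 3))) :=
        (Real.exp_log h0).symm
    _ ≤ Real.exp (Qconst K) := Real.exp_le_exp.mpr (le_max_left _ _)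

lemma w_est (κ : ℂ) (K : ℝ) (hK : 2 * Real.pi + 6 < K) (hκ : ‖κ‖ ≤ K)
    (p : Addr × ℝ) (hp : p ∈ Yset (Qconst K)) (g : ℂ)
    (hg : ‖g - Zc (Fmod p)‖ < Real.pi + 2) :
    (g - κ ∉ {z : ℂ | z.im = 0 ∧ z.re ≤ 0}) ∧
    Real.exp p.2 / 5 ≤ ‖g - κ‖ ∧
    ‖g - κ‖ ≤ 5 / 4 * Real.exp p.2 := by
  have hπ := Real.pi_pos
  set s2 : ℝ := ((ofLex p.1 1 : ℤ) : ℝ) with hs2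
  have hA : (Fmod p).2 = Real.exp p.2 - 1 - 2 * Real.pi * |s2| := by
    simp [Fmod, Fexp, hs2]
  have hQt : Qconst K ≤ p.2 := by simpa using hp.2 0
  have hQA : Qconst K ≤ (Fmod p).2 := by
    have := hp.2 1
    simpa using this
  have hQpos : Real.pi + 2 ≤ Qconst K := le_max_right _ _
  have het : 4 * (K + Real.pi + 3) ≤ Real.exp p.2 :=
    le_trans (exp_Q_ge K hK) (le_trans (Real.exp_le_exp.mpr hQt) le_rfl)
  have hEpos : 0 < Real.exp p.2 := Real.exp_pos _
  set δ := g - Zc (Fmod p) with hδ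
  have hw : g - κ = Zc (Fmod p) + (δ - κ) := by rw [hδ]; ring
  have hδκ : ‖δ - κ‖ ≤ K + Real.pi + 2 := by
    have h1 : ‖δ - κ‖ ≤ ‖δ‖ + ‖κ‖ := by
      simpa using norm_sub_le δ κ
    linarith [hg]
  have hZre : (Zc (Fmod p)).re = (Fmod p).2 := Zc_re _
  have hZim : (Zc (Fmod p)).im = 2 * Real.pi * s2 := by
    rw [Zc_im]
    norm_num [Fmod, shiftA, hs2]
  have hre_w : (g - κ).re = (Fmod p).2 + (δ - κ).re := by
    rw [hw, Complex.add_re, hZre]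
  have him_w : (g - κ).im = 2 * Real.pi * s2 + (δ - κ).im := by
    rw [hw, Complex.add_im, hZim]
  have hre_bd : |(δ - κ).re| ≤ K + Real.pi + 2 :=
    le_trans (Complex.abs_re_le_norm _) hδκ
  have him_bd : |(δ - κ).im| ≤ K + Real.pi + 2 :=
    le_trans (Complex.abs_im_le_norm _) hδκ
  have habs2 : |2 * Real.pi * s2| = 2 * Real.pi * |s2| := by
    rw [abs_mul, abs_of_nonneg (by positivity : (0:ℝ) ≤ 2 * Real.pi)]
  have key : Real.exp p.2 / 5 ≤ (Real.exp p.2 - 1) / 2 - (K + Real.pi + 2) := by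
    linarith
  have hupper : ‖g - κ‖ ≤ 5 / 4 * Real.exp p.2 := by
    have h1 : ‖g - κ‖ ≤ ‖Zc (Fmod p)‖ + ‖δ - κ‖ := by
      rw [hw]
      simpa using norm_add_le (Zc (Fmod p)) (δ - κ)
    have h2 := Complex.norm_le_abs_re_add_abs_im (Zc (Fmod p))
    rw [hZre, hZim] at h2
    have hA0 : 0 ≤ (Fmod p).2 := by linarith
    rw [abs_of_nonneg hA0, habs2] at h2
    have h3 : (Fmod p).2 + 2 * Real.pi * |s2| = Real.exp p.2 - 1 := by
      rw [hA]; ring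
    linarith
  have hcore : Real.exp p.2 / 5 ≤ ‖g - κ‖ ∧
      (g - κ) ∉ {z : ℂ | z.im = 0 ∧ z.re ≤ 0} := by
    by_cases h2 : 2 * Real.pi * |s2| ≤ (Real.exp p.2 - 1) / 2
    · have hre : Real.exp p.2 / 5 ≤ (g - κ).re := by
        have h3 := (abs_le.mp hre_bd).1
        rw [hre_w, hA]
        linarith
      have hrepos : 0 < (g - κ).re := by linarith
      exact ⟨le_trans hre (Complex.re_le_norm _),
        fun hz => absurd hz.2 (not_le.mpr hrepos)⟩
    · push_neg at h2
      have him : Real.exp p.2 / 5 ≤ |(g - κ).im| := by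
        have h4 : (g - κ).im + -((δ - κ).im) = 2 * Real.pi * s2 := by
          rw [him_w]; ring
        have h5 := abs_add_le ((g - κ).im) (-((δ - κ).im))
        rw [h4, abs_neg, habs2] at h5
        linarith
      have himne : (g - κ).im ≠ 0 := by
        intro h0
        rw [h0, abs_zero] at him
        linarith
      exact ⟨le_trans him (Complex.abs_im_le_norm _), fun hz => himne hz.1⟩
  exact ⟨hcore.2, hcore.1, hupper⟩

lemma gmap_est (κ : ℂ) (K : ℝ) (hK : 2 * Real.pi + 6 < K) (hκ : ‖κ‖ ≤ K) :
    ∀ k : ℕ, ∀ p ∈ Yset (Qconst K),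
      |(gmap κ k p).re - p.2| < 2 ∧ ‖gmap κ k p - Zc p‖ < Real.pi + 2 := by
  intro k
  induction k with
  | zero =>
    intro p _
    have hπ := Real.pi_pos
    constructor
    · show |(Zc p).re - p.2| < 2
      rw [Zc_re]
      simp
    · show ‖Zc p - Zc p‖ < Real.pi + 2
      simp
      linarith
  | succ k ih =>
    intro p hp
    have hπ := Real.pi_pos
    have hpF : Fmod p ∈ Yset (Qconst K) := FmodY hp
    have hg := (ih (Fmod p) hpF).2
    obtain ⟨hcut, hlow, hupp⟩ := w_est κ K hK hκ p hp _ hg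
    set w := gmap κ k (Fmod p) - κ with hwdef
    have hEpos : 0 < Real.exp p.2 := Real.exp_pos _
    have hwpos : 0 < ‖w‖ := lt_of_lt_of_le (by positivity) hlow
    have hlog5 : Real.log 5 < 2 := by
      rw [Real.log_lt_iff_lt_exp (by norm_num)]
      have h2 : Real.exp 2 = Real.exp 1 * Real.exp 1 := by rw [← Real.exp_add]; norm_num
      nlinarith [Real.exp_one_gt_d9]
    have hloglow : p.2 - 2 < Real.log (‖w‖) := by
      have h1 : Real.log (Real.exp p.2 / 5) ≤ Real.log (‖w‖) :=
        Real.log_le_log (by positivity) hlow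
      rw [Real.log_div (Real.exp_ne_zero _) (by norm_num), Real.log_exp] at h1
      linarith
    have hloghigh : Real.log (‖w‖) < p.2 + 2 := by
      have h1 : Real.log (‖w‖) ≤ Real.log (5 / 4 * Real.exp p.2) :=
        Real.log_le_log hwpos hupp
      rw [Real.log_mul (by norm_num) (Real.exp_ne_zero _), Real.log_exp] at h1
      have h2 : Real.log (5 / 4 : ℝ) ≤ 5 / 4 - 1 := Real.log_le_sub_one_of_pos (by norm_num)
      linarith
    have hunfold : gmap κ (k + 1) p =
        Complex.log w + 2 * Real.pi * Complex.I * ((ofLex p.1 0 : ℤ) : ℂ) := rfl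
    have harg : |(Complex.log w).im| ≤ Real.pi := by
      rw [Complex.log_im]
      exact Complex.abs_arg_le_pi w
    constructor
    · rw [hunfold, Complex.add_re, Complex.log_re]
      have h0 : (2 * Real.pi * Complex.I * ((ofLex p.1 0 : ℤ) : ℂ)).re = 0 := by simp
      rw [h0, add_zero, abs_lt]
      constructor <;> linarith
    · have hdiff : gmap κ (k + 1) p - Zc p = Complex.log w - (p.2 : ℂ) := by
        rw [hunfold, Zc]; ring
      rw [hdiff]
      have h1 := Complex.norm_le_abs_re_add_abs_im (Complex.log w - (p.2 : ℂ))
      have h2 : (Complex.log w - (p.2 : ℂ)).re = Real.log (‖w‖) - p.2 := by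
        simp [Complex.log_re]
      have h3 : (Complex.log w - (p.2 : ℂ)).im = (Complex.log w).im := by simp
      rw [h2, h3] at h1
      have h4 : |Real.log (‖w‖) - p.2| < 2 :=
        abs_lt.mpr ⟨by linarith, by linarith⟩
      linarith

/-- **Bound on `𝔤_k`** (Lemma 4.1): for all `k` and `(s,t) ∈ Y`, the point
`𝔤_k(𝓕(s,t)) - κ` avoids the branch cut `(-∞,0]` (so `𝔤_{k+1}(s,t)` is given by the
principal logarithm away from its branch cut), `|Re 𝔤_k(s,t) - t| < 2`, and
`|𝔤_k(s,t) - Z(s,t)| < π + 2`. -/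
theorem gmap_bounded (κ : ℂ) (K : ℝ) (hK : 2 * Real.pi + 6 < K)
    (hκ : ‖κ‖ ≤ K) (k : ℕ) (p : Addr × ℝ) (hp : p ∈ Yset (Qconst K)) :
    gmap κ k (Fmod p) - κ ∉ {z : ℂ | z.im = 0 ∧ z.re ≤ 0} ∧
    |(gmap κ k p).re - p.2| < 2 ∧
    ‖gmap κ k p - Zc p‖ < Real.pi + 2 := by
  have hpF : Fmod p ∈ Yset (Qconst K) := FmodY hp
  have h1 := gmap_est κ K hK hκ k p hp
  have h2 := (gmap_est κ K hK hκ k (Fmod p) hpF).2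
  have h3 := w_est κ K hK hκ p hp _ h2
  exact ⟨h3.1, h1.1, h1.2⟩
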